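/- There exist ε₀∈(0,1) and C>0 with the following property. Let V:ℝ→ℝ be 2π-periodic and C⁴ with ‖V−cos‖_{H⁴}≤ε₀, and set m=min V, M=max V. Then for every λ∈ℝ and every continuous 2π-periodic f:ℝ→ℂ, ∫₀^{2π}|V'(y)|²|f(y)|²dy ≤ C·|∫₀^{2π}(V(y)−λ)|f(y)|²dy| + C·λ₀₊·∫₀^{2π}|f(y)|²dy, where λ₀₊ = max(min(λ−m, M−λ), 0). -/

import Mathlib

open Real MeasureTheory

/-- The `L²` norm over one period `[0,2π]` of a real-valued function. -/
noncomputable def l2R (g : ℝ → ℝ) : ℝ := Real.sqrt (∫ y in (0:ℝ)..(2*π), (g y)^2)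

/-- The `H⁴` norm over one period `[0,2π]` of a real-valued function. -/
noncomputable def H4R (g : ℝ → ℝ) : ℝ :=
  Real.sqrt (∑ j ∈ Finset.range 5, (l2R (iteratedDeriv j g))^2)

set_option maxHeartbeats 1000000

lemma periodic_deriv' (f : ℝ → ℝ) (c : ℝ) (h : Function.Periodic f c) :
    Function.Periodic (deriv f) c := by
  intro x
  have : (fun y => f (y + c)) = f := funext h
  rw [← deriv_comp_add_const f c x, this]

/-- Descent lemma: if `W'' ≤ L` everywhere and `m ≤ W`, then `W'^2 ≤ 2L(W−m)`. -/
lemma descent (W : ℝ → ℝ) (hW : ContDiff ℝ 2 W) (L m : ℝ) (hL : 0 < L)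
    (hW'' : ∀ x, deriv (deriv W) x ≤ L) (hm : ∀ x, m ≤ W x) (x : ℝ) :
    (deriv W x)^2 ≤ 2*L*(W x - m) := by
  have hWd : Differentiable ℝ W := hW.differentiable (by norm_num)
  have hW'd : Differentiable ℝ (deriv W) := by
    have := hW.differentiable_iteratedDeriv 1 (by norm_num)
    simpa [iteratedDeriv_one] using this
  set c := deriv W x with hc
  set ψ : ℝ → ℝ := fun s => deriv W (x + s) - c - L * s with hψ
  have hψd : Differentiable ℝ ψ := by
    apply Differentiable.sub
    · exact (hW'd.comp ((differentiable_id).const_add x)).sub_const c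
    · exact (differentiable_id.const_mul L)
  have hψderiv : ∀ s, deriv ψ s = deriv (deriv W) (x + s) - L := by
    intro s
    have h1 : HasDerivAt (fun s : ℝ => deriv W (x + s)) (deriv (deriv W) (x + s)) s := by
      have h := ((hW'd (x + s)).hasDerivAt.comp s ((hasDerivAt_id s).const_add x))
      simp only [mul_one] at h; exact h
    have h2 : HasDerivAt ψ (deriv (deriv W) (x + s) - L) s := by
      have h := (h1.sub_const c).sub ((hasDerivAt_id s).const_mul L)
      simp only [mul_one] at h; exact h
    exact h2.deriv
  have hψanti : Antitone ψ := by
    apply antitone_of_deriv_nonpos hψd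
    intro s
    rw [hψderiv s]
    linarith [hW'' (x + s)]
  have hψ0 : ψ 0 = 0 := by simp [hψ, hc]
  set φ : ℝ → ℝ := fun s => W (x + s) - W x - s * c - L * s^2 / 2 with hφ
  have hφd : Differentiable ℝ φ := by
    apply Differentiable.sub
    apply Differentiable.sub
    · exact (hWd.comp ((differentiable_id).const_add x)).sub_const (W x)
    · exact differentiable_id.mul_const c
    · exact ((differentiable_id.pow 2).const_mul L).div_const 2
  have hφderiv : ∀ s, deriv φ s = ψ s := by
    intro s
    have h1 : HasDerivAt (fun s : ℝ => W (x + s)) (deriv W (x + s)) s := by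
      have h := ((hWd (x + s)).hasDerivAt.comp s ((hasDerivAt_id s).const_add x))
      simp only [mul_one] at h; exact h
    have h2 : HasDerivAt φ (deriv W (x + s) - c - L * (2 * s) / 2) s := by
      have h3 : HasDerivAt (fun s : ℝ => L * s ^ 2 / 2) (L * (2 * s) / 2) s := by
        simpa using (((hasDerivAt_pow 2 s).const_mul L).div_const 2)
      have h := (((h1.sub_const (W x)).sub ((hasDerivAt_id s).mul_const c)).sub h3)
      simp only [one_mul] at h; exact h
    rw [h2.deriv, hψ]
    ring
  have hφle : ∀ s, φ s ≤ 0 := by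
    intro s
    rcases le_total 0 s with hs | hs
    · have : AntitoneOn φ (Set.Ici 0) := by
        apply antitoneOn_of_deriv_nonpos (convex_Ici 0) hφd.continuous.continuousOn
          hφd.differentiableOn
        intro t ht
        rw [hφderiv t]
        rw [interior_Ici] at ht
        have := hψanti (le_of_lt ht)
        rw [hψ0] at this; linarith
      have := this Set.self_mem_Ici hs hs
      simpa [hφ] using this
    · have : MonotoneOn φ (Set.Iic 0) := by
        apply monotoneOn_of_deriv_nonneg (convex_Iic 0) hφd.continuous.continuousOn
          hφd.differentiableOn
        intro t ht
        rw [hφderiv t]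
        rw [interior_Iic] at ht
        have := hψanti (le_of_lt ht)
        rw [hψ0] at this; linarith
      have := this hs Set.self_mem_Iic hs
      simpa [hφ] using this
  have key := hφle (-c / L)
  have hmx := hm (x + (-c / L))
  have hL' : L ≠ 0 := ne_of_gt hL
  rw [hφ] at key
  simp only at key
  clear_value c
  have e : -c / L * c = -(c*c)/L := by field_simp
  have e2 : L * (-c/L)^2/2 = c*c/(2*L) := by field_simp
  rw [e, e2] at key
  have e4 : -(c*c)/L = -(2*(c*c/(2*L))) := by field_simp
  rw [e4] at key
  have h5 : c*c/(2*L) ≤ W x - m := by linarith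
  rw [div_le_iff₀ (by linarith : (0:ℝ) < 2*L)] at h5
  have h7 : (W x - m)*(2*L) = 2*L*(W x - m) := by ring
  rw [h7] at h5
  calc (c:ℝ)^2 = c*c := sq c
  _ ≤ 2*L*(W x - m) := h5

lemma sup_bound (h : ℝ → ℝ) (hc : Continuous h) (hd : Differentiable ℝ h)
    (hdc : Continuous (deriv h)) (ε : ℝ) (hε : 0 < ε)
    (h1 : (∫ y in (0:ℝ)..(2*π), (h y)^2) ≤ ε^2)
    (h2 : (∫ y in (0:ℝ)..(2*π), (deriv h y)^2) ≤ ε^2) :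
    ∀ x ∈ Set.Icc (0:ℝ) (2*π), |h x| ≤ 5*ε := by
  have hπ := Real.pi_pos
  have h2π : (0:ℝ) ≤ 2*π := by linarith
  -- find a point where h is small
  have hex : ∃ a ∈ Set.Icc (0:ℝ) (2*π), (h a)^2 ≤ ε^2/π := by
    by_contra hcon
    push_neg at hcon
    have hmono : (∫ y in (0:ℝ)..(2*π), (ε^2/π)) ≤ ∫ y in (0:ℝ)..(2*π), (h y)^2 := by
      apply intervalIntegral.integral_mono_on h2π
        (intervalIntegrable_const) ((hc.pow 2).intervalIntegrable _ _)
      intro x hx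
      exact le_of_lt (hcon x hx)
    rw [intervalIntegral.integral_const, smul_eq_mul] at hmono
    have : (2*π - 0) * (ε^2/π) = 2*ε^2 := by field_simp; ring
    rw [this] at hmono
    nlinarith
  obtain ⟨a, ha, hsmall⟩ := hex
  have hapos : |h a| ≤ ε := by
    have h3 : (h a)^2 ≤ ε^2 := by
      have : ε^2/π ≤ ε^2 := by
        rw [div_le_iff₀ hπ]
        nlinarith [Real.pi_gt_three, sq_nonneg ε]
      linarith
    nlinarith [abs_nonneg (h a), sq_abs (h a)]
  -- pointwise bound on |deriv h|
  set Φ : ℝ → ℝ := fun y => (deriv h y)^2/(2*ε) + ε/2 with hΦ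
  have hΦc : Continuous Φ := ((hdc.pow 2).div_const _).add continuous_const
  have hΦnn : ∀ y, 0 ≤ Φ y := by
    intro y; have := sq_nonneg (deriv h y); positivity
  have hΦb : ∀ y, |deriv h y| ≤ Φ y := by
    intro y
    have e : (deriv h y)^2/(2*ε) + ε/2 = ((deriv h y)^2 + ε^2)/(2*ε) := by field_simp
    rw [hΦ]; simp only
    rw [e, le_div_iff₀ (by positivity)]
    nlinarith [sq_nonneg (|deriv h y| - ε), sq_abs (deriv h y), abs_nonneg (deriv h y)]
  have hΦint : IntervalIntegrable Φ volume 0 (2*π) := hΦc.intervalIntegrable _ _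
  have hΦtot : (∫ y in (0:ℝ)..(2*π), Φ y) ≤ ε/2 + π*ε := by
    have e1 : (∫ y in (0:ℝ)..(2*π), Φ y)
        = (∫ y in (0:ℝ)..(2*π), (deriv h y)^2)/(2*ε) + (2*π)*(ε/2) := by
      rw [hΦ]
      rw [intervalIntegral.integral_add (f := fun y => deriv h y ^ 2 / (2*ε)) (g := fun _ => ε/2)
        (((hdc.pow 2).div_const _).intervalIntegrable _ _)
        intervalIntegrable_const]
      rw [intervalIntegral.integral_div, intervalIntegral.integral_const, smul_eq_mul]
      ring_nf
    rw [e1]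
    have : (∫ y in (0:ℝ)..(2*π), (deriv h y)^2)/(2*ε) ≤ ε^2/(2*ε) := by
      gcongr
    have e2 : ε^2/(2*ε) = ε/2 := by field_simp
    nlinarith
  intro x hx
  -- FTC
  have hftc : h x - h a = ∫ y in a..x, deriv h y :=
    (intervalIntegral.integral_deriv_eq_sub (fun y _ => hd y)
      (hdc.intervalIntegrable _ _)).symm
  have habs : |∫ y in a..x, deriv h y| ≤ ∫ y in (0:ℝ)..(2*π), Φ y := by
    rcases le_total a x with hax | hax
    · calc |∫ y in a..x, deriv h y| ≤ ∫ y in a..x, |deriv h y| :=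
            intervalIntegral.abs_integral_le_integral_abs hax
      _ ≤ ∫ y in a..x, Φ y := by
          apply intervalIntegral.integral_mono_on hax
            ((hdc.abs).intervalIntegrable _ _) (hΦc.intervalIntegrable _ _)
          intro y _; exact hΦb y
      _ ≤ ∫ y in (0:ℝ)..(2*π), Φ y := by
          apply intervalIntegral.integral_mono_interval ha.1 hax hx.2
            (MeasureTheory.ae_of_all _ hΦnn) hΦint
    · have hsymm : (∫ y in a..x, deriv h y) = -(∫ y in x..a, deriv h y) :=
        (intervalIntegral.integral_symm x a)
      rw [hsymm, abs_neg]
      calc |∫ y in x..a, deriv h y| ≤ ∫ y in x..a, |deriv h y| :=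
            intervalIntegral.abs_integral_le_integral_abs hax
      _ ≤ ∫ y in x..a, Φ y := by
          apply intervalIntegral.integral_mono_on hax
            ((hdc.abs).intervalIntegrable _ _) (hΦc.intervalIntegrable _ _)
          intro y _; exact hΦb y
      _ ≤ ∫ y in (0:ℝ)..(2*π), Φ y := by
          apply intervalIntegral.integral_mono_interval hx.1 hax ha.2
            (MeasureTheory.ae_of_all _ hΦnn) hΦint
  have : |h x| ≤ |h a| + |∫ y in a..x, deriv h y| := by
    have : h x = h a + (h x - h a) := by ring
    rw [this, hftc]
    exact abs_add_le _ _
  have hpi : π < 3.15 := pi_lt_d2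
  calc |h x| ≤ |h a| + |∫ y in a..x, deriv h y| := this
  _ ≤ ε + (ε/2 + π*ε) := by linarith [habs.trans hΦtot]
  _ ≤ 5*ε := by nlinarith

theorem stmt7 :
    ∃ ε₀ C : ℝ, ε₀ ∈ Set.Ioo (0:ℝ) 1 ∧ 0 < C ∧
      ∀ (V : ℝ → ℝ), Function.Periodic V (2*π) → ContDiff ℝ 4 V →
        H4R (fun y => V y - Real.cos y) ≤ ε₀ →
      ∀ (lam : ℝ) (f : ℝ → ℂ), Continuous f → Function.Periodic f (2*π) →
        (∫ y in (0:ℝ)..(2*π), (deriv V y)^2 * ‖f y‖^2) ≤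
          C * |∫ y in (0:ℝ)..(2*π), (V y - lam) * ‖f y‖^2| +
            C * max (min (lam - sInf (Set.range V)) (sSup (Set.range V) - lam)) 0 *
              ∫ y in (0:ℝ)..(2*π), ‖f y‖^2 := by
  refine ⟨1/10, 3, ⟨by norm_num, by norm_num⟩, by norm_num, ?_⟩
  intro V hVper hV4 hH4 lam f hf _hfper
  have hπ := Real.pi_pos
  have h2π : (0:ℝ) ≤ 2*π := by linarith
  set g : ℝ → ℝ := fun y => V y - Real.cos y with hg
  have hgc : ContDiff ℝ 4 g := hV4.sub (Real.contDiff_cos.of_le le_top)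
  -- L² bounds on iterated derivatives of g
  have hL2 : ∀ j, (∫ y in (0:ℝ)..(2*π), (iteratedDeriv j g y)^2) ≤ (1/10)^2 → True := fun _ _ => trivial
  have hSnn : (0:ℝ) ≤ ∑ j ∈ Finset.range 5, (l2R (iteratedDeriv j g))^2 :=
    Finset.sum_nonneg fun i _ => sq_nonneg _
  have hsum : (∑ j ∈ Finset.range 5, (l2R (iteratedDeriv j g))^2) ≤ (1/10)^2 := by
    have := hH4
    rw [H4R] at this
    calc (∑ j ∈ Finset.range 5, (l2R (iteratedDeriv j g))^2)
        = (Real.sqrt (∑ j ∈ Finset.range 5, (l2R (iteratedDeriv j g))^2))^2 :=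
          (Real.sq_sqrt hSnn).symm
    _ ≤ (1/10)^2 := by
        apply pow_le_pow_left₀ (Real.sqrt_nonneg _) this
  have hIj : ∀ j ∈ Finset.range 5,
      (∫ y in (0:ℝ)..(2*π), (iteratedDeriv j g y)^2) ≤ (1/10)^2 := by
    intro j hj
    have h1 : (l2R (iteratedDeriv j g))^2 ≤ (1/10)^2 :=
      le_trans (Finset.single_le_sum (fun i _ => sq_nonneg (l2R (iteratedDeriv i g))) hj) hsum
    have h2 : (0:ℝ) ≤ ∫ y in (0:ℝ)..(2*π), (iteratedDeriv j g y)^2 :=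
      intervalIntegral.integral_nonneg h2π (fun u _ => sq_nonneg _)
    rw [l2R, Real.sq_sqrt h2] at h1
    exact h1
  have e2 : iteratedDeriv 2 g = deriv (deriv g) := by
    rw [iteratedDeriv_succ, iteratedDeriv_one]
  have e3 : iteratedDeriv 3 g = deriv (deriv (deriv g)) := by
    rw [iteratedDeriv_succ, e2]
  -- regularity facts
  have hg2d : Differentiable ℝ (deriv (deriv g)) := by
    have := hgc.differentiable_iteratedDeriv 2 (by norm_num)
    rwa [e2] at this
  have hg2c : Continuous (deriv (deriv g)) := hg2d.continuous
  have hg3c : Continuous (deriv (deriv (deriv g))) := by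
    have := hgc.continuous_iteratedDeriv 3 (by norm_num)
    rwa [e3] at this
  -- sup bound for g''
  have hg2sup : ∀ x ∈ Set.Icc (0:ℝ) (2*π), |deriv (deriv g) x| ≤ 5*(1/10) := by
    apply sup_bound (deriv (deriv g)) hg2c hg2d hg3c (1/10) (by norm_num)
    · have := hIj 2 (by norm_num)
      rwa [e2] at this
    · have := hIj 3 (by norm_num)
      rwa [e3] at this
  -- periodicity of g''
  have hgper : Function.Periodic g (2*π) := by
    intro x
    simp only [hg]
    rw [hVper x, Real.cos_add_two_pi]
  have hg2per : Function.Periodic (deriv (deriv g)) (2*π) :=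
    periodic_deriv' _ _ (periodic_deriv' _ _ hgper)
  have hg2all : ∀ x, |deriv (deriv g) x| ≤ 1/2 := by
    intro x
    obtain ⟨y, hy, e⟩ := hg2per.exists_mem_Ico₀ Real.two_pi_pos x
    rw [e]
    have := hg2sup y ⟨hy.1, le_of_lt hy.2⟩
    linarith
  -- derivative identities
  have hVd : Differentiable ℝ V := hV4.differentiable (by norm_num)
  have hV'd : Differentiable ℝ (deriv V) := by
    have := hV4.differentiable_iteratedDeriv 1 (by norm_num)
    rwa [iteratedDeriv_one] at this
  have hdg : deriv g = fun y => deriv V y + Real.sin y := by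
    funext y
    have h1 : HasDerivAt g (deriv V y - (-Real.sin y)) y :=
      ((hVd y).hasDerivAt.sub (Real.hasDerivAt_cos y))
    rw [h1.deriv]; ring
  have hddg : ∀ y, deriv (deriv g) y = deriv (deriv V) y + Real.cos y := by
    intro y
    rw [hdg]
    have h1 : HasDerivAt (fun y => deriv V y + Real.sin y)
        (deriv (deriv V) y + Real.cos y) y :=
      ((hV'd y).hasDerivAt.add (Real.hasDerivAt_sin y))
    rw [h1.deriv]
  -- second derivative bounds for V and -V
  have hVpp : ∀ x, deriv (deriv V) x ≤ 3/2 := by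
    intro x
    have h1 := hg2all x
    have h2 := hddg x
    have h3 := Real.neg_one_le_cos x
    have h4 : deriv (deriv g) x ≤ 1/2 := (abs_le.mp h1).2
    linarith
  have hnegV : deriv (fun y => -V y) = fun y => -(deriv V y) := by
    funext y; exact deriv.neg
  have hVppneg : ∀ x, deriv (deriv (fun y => -V y)) x ≤ 3/2 := by
    intro x
    rw [hnegV]
    have : deriv (fun y => -(deriv V y)) x = -(deriv (deriv V) x) := deriv.neg
    rw [this]
    have h1 := hg2all x
    have h2 := hddg x
    have h3 := Real.cos_le_one x
    have h4 : -(1/2) ≤ deriv (deriv g) x := (abs_le.mp h1).1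
    linarith
  -- min/max bounds
  set m := sInf (Set.range V) with hm_def
  set M := sSup (Set.range V) with hM_def
  obtain ⟨x₀, _, hmin⟩ := (isCompact_Icc (a := (0:ℝ)) (b := 2*π)).exists_isMinOn
    (Set.nonempty_Icc.mpr h2π) hV4.continuous.continuousOn
  obtain ⟨x₁, _, hmax⟩ := (isCompact_Icc (a := (0:ℝ)) (b := 2*π)).exists_isMaxOn
    (Set.nonempty_Icc.mpr h2π) hV4.continuous.continuousOn
  have hbddb : BddBelow (Set.range V) := by
    refine ⟨V x₀, ?_⟩
    rintro _ ⟨w, rfl⟩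
    obtain ⟨y, hy, e⟩ := hVper.exists_mem_Ico₀ Real.two_pi_pos w
    rw [e]
    exact hmin ⟨hy.1, le_of_lt hy.2⟩
  have hbdda : BddAbove (Set.range V) := by
    refine ⟨V x₁, ?_⟩
    rintro _ ⟨w, rfl⟩
    obtain ⟨y, hy, e⟩ := hVper.exists_mem_Ico₀ Real.two_pi_pos w
    rw [e]
    exact hmax ⟨hy.1, le_of_lt hy.2⟩
  have hm : ∀ z, m ≤ V z := fun z => csInf_le hbddb ⟨z, rfl⟩
  have hM : ∀ z, V z ≤ M := fun z => le_csSup hbdda ⟨z, rfl⟩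
  have hmM : m ≤ M := (hm 0).trans (hM 0)
  -- descent lemma applications
  have hV2 : ContDiff ℝ 2 V := hV4.of_le (by norm_num)
  have hA : ∀ x, (deriv V x)^2 ≤ 3*(V x - m) := by
    intro x
    have := descent V hV2 (3/2) m (by norm_num) hVpp hm x
    linarith
  have hB : ∀ x, (deriv V x)^2 ≤ 3*(M - V x) := by
    intro x
    have hmneg : ∀ z, -M ≤ (fun y => -V y) z := fun z => by simpa using neg_le_neg (hM z)
    have := descent (fun y => -V y) hV2.neg (3/2) (-M) (by norm_num) hVppneg hmneg x
    rw [hnegV] at this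
    simp only [neg_sq] at this
    linarith
  -- integral part
  have hV'c : Continuous (deriv V) := hV4.continuous_deriv (by norm_num)
  have hFc : Continuous (fun y => ‖f y‖^2) := (hf.norm).pow 2
  have hFnn : ∀ y, (0:ℝ) ≤ ‖f y‖^2 := fun y => sq_nonneg _
  have hI3nn : (0:ℝ) ≤ ∫ y in (0:ℝ)..(2*π), ‖f y‖^2 :=
    intervalIntegral.integral_nonneg h2π (fun u _ => hFnn u)
  set I2 := ∫ y in (0:ℝ)..(2*π), (V y - lam) * ‖f y‖^2 with hI2_def
  set I3 := ∫ y in (0:ℝ)..(2*π), ‖f y‖^2 with hI3_def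
  set lam0 := max (min (lam - m) (M - lam)) 0 with hlam0_def
  have hint1 : IntervalIntegrable (fun y => (deriv V y)^2 * ‖f y‖^2) volume 0 (2*π) :=
    ((hV'c.pow 2).mul hFc).intervalIntegrable _ _
  have hintVF : IntervalIntegrable (fun y => (V y - lam) * ‖f y‖^2) volume 0 (2*π) :=
    (((hV4.continuous).sub continuous_const).mul hFc).intervalIntegrable _ _
  have hintF : IntervalIntegrable (fun y => ‖f y‖^2) volume 0 (2*π) :=
    hFc.intervalIntegrable _ _
  have hintVFneg : IntervalIntegrable (fun y => -((V y - lam) * ‖f y‖^2)) volume 0 (2*π) :=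
    ((((hV4.continuous).sub continuous_const).mul hFc).neg).intervalIntegrable _ _
  rcases le_total lam ((m+M)/2) with hcase | hcase
  · -- lam below midpoint : use hA
    have hkey : lam - m ≤ lam0 := by
      have h1 : lam - m ≤ M - lam := by linarith
      calc lam - m ≤ min (lam - m) (M - lam) := le_min le_rfl h1
      _ ≤ lam0 := le_max_left _ _
    have hptwise : ∀ y ∈ Set.Icc (0:ℝ) (2*π),
        (deriv V y)^2 * ‖f y‖^2 ≤ (3*((V y - lam) * ‖f y‖^2) + (3*(lam - m)) * ‖f y‖^2) := by
      intro y _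
      have h1 := hA y
      have h2 := hFnn y
      nlinarith [mul_le_mul_of_nonneg_right h1 h2]
    have hmono : (∫ y in (0:ℝ)..(2*π), (deriv V y)^2 * ‖f y‖^2)
        ≤ ∫ y in (0:ℝ)..(2*π), (3*((V y - lam) * ‖f y‖^2) + (3*(lam - m)) * ‖f y‖^2) := by
      apply intervalIntegral.integral_mono_on h2π hint1 _ hptwise
      exact ((hintVF.const_mul 3).add (hintF.const_mul _))
    rw [intervalIntegral.integral_add (hintVF.const_mul 3) (hintF.const_mul _)] at hmono
    rw [intervalIntegral.integral_const_mul, intervalIntegral.integral_const_mul] at hmono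
    have hI2abs : I2 ≤ |I2| := le_abs_self _
    have hlam0I3 : (lam - m) * I3 ≤ lam0 * I3 := mul_le_mul_of_nonneg_right hkey hI3nn
    calc (∫ y in (0:ℝ)..(2*π), (deriv V y)^2 * ‖f y‖^2)
        ≤ 3 * I2 + 3 * (lam - m) * I3 := by
          rw [hI2_def, hI3_def]; linarith [hmono]
    _ ≤ 3 * |I2| + 3 * lam0 * I3 := by nlinarith [hI2abs, hlam0I3]
  · -- lam above midpoint : use hB
    have hkey : M - lam ≤ lam0 := by
      have h1 : M - lam ≤ lam - m := by linarith
      calc M - lam ≤ min (lam - m) (M - lam) := le_min h1 le_rfl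
      _ ≤ lam0 := le_max_left _ _
    have hptwise : ∀ y ∈ Set.Icc (0:ℝ) (2*π),
        (deriv V y)^2 * ‖f y‖^2 ≤ (3*(-((V y - lam) * ‖f y‖^2)) + (3*(M - lam)) * ‖f y‖^2) := by
      intro y _
      have h1 := hB y
      have h2 := hFnn y
      nlinarith [mul_le_mul_of_nonneg_right h1 h2]
    have hmono : (∫ y in (0:ℝ)..(2*π), (deriv V y)^2 * ‖f y‖^2)
        ≤ ∫ y in (0:ℝ)..(2*π), (3*(-((V y - lam) * ‖f y‖^2)) + (3*(M - lam)) * ‖f y‖^2) := by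
      apply intervalIntegral.integral_mono_on h2π hint1 _ hptwise
      exact ((hintVFneg.const_mul 3).add (hintF.const_mul _))
    rw [intervalIntegral.integral_add (hintVFneg.const_mul 3) (hintF.const_mul _)] at hmono
    rw [intervalIntegral.integral_const_mul, intervalIntegral.integral_const_mul,
      intervalIntegral.integral_neg] at hmono
    have hI2abs : -I2 ≤ |I2| := neg_le_abs _
    have hlam0I3 : (M - lam) * I3 ≤ lam0 * I3 := mul_le_mul_of_nonneg_right hkey hI3nn
    calc (∫ y in (0:ℝ)..(2*π), (deriv V y)^2 * ‖f y‖^2)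
        ≤ 3 * (-I2) + 3 * (M - lam) * I3 := by
          rw [hI2_def, hI3_def]; linarith [hmono]
    _ ≤ 3 * |I2| + 3 * lam0 * I3 := by nlinarith [hI2abs, hlam0I3]
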